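/- Let R be a convergent, forward-closed term rewriting system, and let l1 → r1 and l2 → r2 be rules in R such that some proper non-variable subterm of l1 is an instance of l2. Then R' = R \ {l1 → r1} is convergent, forward-closed, and generates the same congruence as R. -/

import Mathlib

/-! Basic first-order terms, positions, substitutions and rewriting. -/

inductive Term (F : Type) : Type
  | var : Nat → Term F
  | app : F → List (Term F) → Term F

namespace Term

def subst {F : Type} (σ : Nat → Term F) : Term F → Term F
  | var n => σ n
  | app f ts => app f (ts.attach.map fun ⟨t, _⟩ => t.subst σ)

def root {F : Type} : Term F → Option F
  | var _ => none
  | app f _ => some f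

def label {F : Type} : Term F → F ⊕ Nat
  | var n => Sum.inr n
  | app f _ => Sum.inl f

def IsVar {F : Type} : Term F → Prop
  | var _ => True
  | app _ _ => False

def varsL {F : Type} : Term F → List Nat
  | var n => [n]
  | app _ ts => (ts.attach.map fun ⟨t, _⟩ => t.varsL).flatten

end Term

abbrev Rule (F : Type) := Term F × Term F
abbrev TRS (F : Type) := Set (Rule F)

/-- `SubtermAt t p u` : the subterm of `t` at position `p` is `u`. -/
inductive SubtermAt {F : Type} : Term F → List Nat → Term F → Prop
  | here (t : Term F) : SubtermAt t [] t
  | there {f : F} {ts : List (Term F)} {i : Nat} {u : Term F} {p : List Nat} {v : Term F} :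
      ts[i]? = some u → SubtermAt u p v → SubtermAt (Term.app f ts) (i :: p) v

/-- `ReplaceAt t p v t'` : replacing the subterm of `t` at position `p` by `v` yields `t'`. -/
inductive ReplaceAt {F : Type} : Term F → List Nat → Term F → Term F → Prop
  | here (t u : Term F) : ReplaceAt t [] u u
  | there {f : F} {ts : List (Term F)} {i : Nat} {u : Term F} {p : List Nat} {v w : Term F} :
      ts[i]? = some u → ReplaceAt u p v w →
      ReplaceAt (Term.app f ts) (i :: p) v (Term.app f (ts.set i w))

variable {F : Type}

/-- One rewrite step using the given rule (at some position, with some substitution). -/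
def RuleStep (ρ : Rule F) (s t : Term F) : Prop :=
  ∃ (σ : Nat → Term F) (p : List Nat),
    SubtermAt s p (ρ.1.subst σ) ∧ ReplaceAt s p (ρ.2.subst σ) t

def OneStep (R : TRS F) (s t : Term F) : Prop := ∃ ρ ∈ R, RuleStep ρ s t

/-- A rewrite step at the root position. -/
def RootStep (R : TRS F) (s t : Term F) : Prop :=
  ∃ ρ ∈ R, ∃ σ : Nat → Term F, s = ρ.1.subst σ ∧ t = ρ.2.subst σ

def StarRW (R : TRS F) : Term F → Term F → Prop := Relation.ReflTransGen (OneStep R)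
def Plus (R : TRS F) : Term F → Term F → Prop := Relation.TransGen (OneStep R)
/-- Convertibility (the congruence / equational theory generated by `R`). -/
def Conv (R : TRS F) : Term F → Term F → Prop := Relation.EqvGen (OneStep R)
def Joinable (R : TRS F) (s t : Term F) : Prop := ∃ u, StarRW R s u ∧ StarRW R t u
def NormalForm (R : TRS F) (t : Term F) : Prop := ∀ u, ¬ OneStep R t u
/-- `t` is the `R`-normal form of `s`. -/
def NFof (R : TRS F) (s t : Term F) : Prop := StarRW R s t ∧ NormalForm R t
def Terminating (R : TRS F) : Prop := WellFounded (fun a b : Term F => OneStep R b a)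
def Confluent (R : TRS F) : Prop := ∀ s t u, StarRW R s t → StarRW R s u → Joinable R t u
def Convergent (R : TRS F) : Prop := Confluent R ∧ Terminating R

/-- every proper subterm is irreducible -/
def EpsIrreducible (R : TRS F) (t : Term F) : Prop :=
  ∀ p u, SubtermAt t p u → p ≠ [] → NormalForm R u

def InnermostRedex (R : TRS F) (t : Term F) : Prop :=
  EpsIrreducible R t ∧ ¬ NormalForm R t

/-- Forward-closed, via the one-step-to-normal-form characterization. -/
def FCclosed (R : TRS F) : Prop :=
  ∀ t, InnermostRedex R t → ∀ u, NFof R t u → OneStep R t u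

def Unifies (σ : Nat → Term F) (s t : Term F) : Prop := s.subst σ = t.subst σ

def IsMGU (σ : Nat → Term F) (s t : Term F) : Prop :=
  Unifies σ s t ∧ ∀ τ, Unifies τ s t → ∃ δ, ∀ x, τ x = (σ x).subst δ

def IsRenaming (ρ : Nat → Term F) : Prop :=
  ∃ f : Nat → Nat, Function.Injective f ∧ ∀ n, ρ n = Term.var (f n)

/-- Redundancy criterion for an oriented equation `e` whose right-hand side is
reachable from its left-hand side: some proper subterm of the lhs is reducible. -/
def Redundant (R : TRS F) (e : Rule F) : Prop :=
  ∃ p u, p ≠ ([] : List Nat) ∧ SubtermAt e.1 p u ∧ ¬ NormalForm R u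

/-- `R₁ ↝ R₂`: forward overlaps of rules of `R₂` (renamed apart) into
right-hand sides of rules of `R₁`, at non-variable positions, via an mgu. -/
def FStep (R₁ R₂ : TRS F) : TRS F :=
  { e | ∃ (l₁ r₁ l₂ r₂ : Term F) (ρ : Nat → Term F) (p : List Nat) (u : Term F)
          (σ : Nat → Term F) (r₁' : Term F),
      (l₁, r₁) ∈ R₁ ∧ (l₂, r₂) ∈ R₂ ∧ IsRenaming ρ ∧
      SubtermAt r₁ p u ∧ ¬ u.IsVar ∧ IsMGU σ u (l₂.subst ρ) ∧
      ReplaceAt r₁ p (r₂.subst ρ) r₁' ∧ e = (l₁.subst σ, r₁'.subst σ) }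

def FCiter (R : TRS F) : Nat → TRS F
  | 0 => R
  | k + 1 => FCiter R k ∪ { e | e ∈ FStep (FCiter R k) R ∧ ¬ Redundant (FCiter R k) e }

def FCinf (R : TRS F) : TRS F := ⋃ k, FCiter R k

/-- Forward-closed, via the forward-closure construction: `FC(R) = R`. -/
def ForwardClosedFC (R : TRS F) : Prop := FCinf R = R

/-- `RHS(R)`: `R` together with the conclusions of right-hand-side critical
pair inferences (second rule renamed apart). -/
def RHSset (R : TRS F) : TRS F :=
  R ∪ { e | ∃ (s t u₀ v₀ : Term F) (ρ σ : Nat → Term F), (s, t) ∈ R ∧ (u₀, v₀) ∈ R ∧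
        IsRenaming ρ ∧ IsMGU σ t (v₀.subst ρ) ∧
        s.subst σ ≠ (u₀.subst ρ).subst σ ∧ e = (s.subst σ, (u₀.subst ρ).subst σ) }

/-- the (unordered) pairs of root symbols of two equations coincide -/
def RootPairSimilar (e₁ e₂ : Rule F) : Prop :=
  (e₁.1.root = e₂.1.root ∧ e₁.2.root = e₂.2.root) ∨
  (e₁.1.root = e₂.2.root ∧ e₁.2.root = e₂.1.root)

def QuasiDet (E : TRS F) : Prop :=
  (∀ e ∈ E, ¬ e.1.IsVar ∧ ¬ e.2.IsVar) ∧
  (∀ e ∈ E, e.1.root ≠ e.2.root) ∧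
  (∀ e₁ ∈ E, ∀ e₂ ∈ E, e₁ ≠ e₂ → ¬ RootPairSimilar e₁ e₂)

def HasRootPairRepetition (E : TRS F) : Prop :=
  ∃ e₁ ∈ E, ∃ e₂ ∈ E, e₁ ≠ e₂ ∧ RootPairSimilar e₁ e₂

def VarPreserving (R : TRS F) : Prop :=
  ∀ e ∈ R, ∀ n, n ∈ Term.varsL e.1 ↔ n ∈ Term.varsL e.2

def RightReduced (R : TRS F) : Prop := ∀ e ∈ R, NormalForm R e.2

def AlmostLeftReduced (R : TRS F) : Prop :=
  ¬ ∃ (l₁ r₁ l₂ r₂ : Term F) (p : List Nat) (u : Term F) (σ : Nat → Term F),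
      (l₁, r₁) ∈ R ∧ (l₂, r₂) ∈ R ∧ p ≠ [] ∧ SubtermAt l₁ p u ∧ u = l₂.subst σ

def NonSubtermCollapsing (R : TRS F) : Prop :=
  ¬ ∃ (t u : Term F) (p : List Nat), p ≠ [] ∧ SubtermAt u p t ∧ Conv R t u

structure LMSystem (R : TRS F) : Prop where
  convergent : Convergent R
  almostLeftReduced : AlmostLeftReduced R
  rightReduced : RightReduced R
  nonCollapsing : NonSubtermCollapsing R
  forwardClosed : FCclosed R
  quasiDet : QuasiDet (RHSset R)

/-- the symbol (function symbol or variable) of a term at a position, if defined -/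
def labelAt {F : Type} : List Nat → Term F → Option (F ⊕ Nat)
  | [], t => some t.label
  | i :: p, Term.app _ ts => (ts[i]?).bind (labelAt p)
  | _ :: _, Term.var _ => none

/-- outermost distinguishing position -/
def ODP (s t : Term F) (p : List Nat) : Prop :=
  (labelAt p s ≠ none ∨ labelAt p t ≠ none) ∧
  labelAt p s ≠ labelAt p t ∧
  ∀ q, q <+: p → q ≠ p → labelAt q s = labelAt q t


/-! Auxiliary lemmas -/

theorem Term.subst_app (σ : Nat → Term F) (f : F) (ts : List (Term F)) :
    (Term.app f ts).subst σ = Term.app f (ts.map (fun t => t.subst σ)) := by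
  simp [Term.subst]

theorem Term.subst_subst' (s σ : Nat → Term F) :
    ∀ t : Term F, (t.subst s).subst σ = t.subst (fun n => (s n).subst σ)
  | .var n => by simp [Term.subst]
  | .app f ts => by
    simp only [Term.subst_app, List.map_map]
    congr 1
    refine List.map_congr_left (fun t ht => ?_)
    exact Term.subst_subst' s σ t
termination_by t => sizeOf t
decreasing_by
  have := List.sizeOf_lt_of_mem ht
  simp [Term.app.sizeOf_spec]
  omega

theorem subtermAt_subst {σ : Nat → Term F} {t : Term F} {p : List Nat} {u : Term F}
    (h : SubtermAt t p u) : SubtermAt (t.subst σ) p (u.subst σ) := by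
  induction h with
  | here t => exact .here _
  | there hget _ ih =>
    rw [Term.subst_app]
    exact .there (by rw [List.getElem?_map, hget]; rfl) ih

theorem subtermAt_trans {t : Term F} {p : List Nat} {u : Term F} {q : List Nat} {v : Term F} :
    SubtermAt t p u → SubtermAt u q v → SubtermAt t (p ++ q) v := by
  intro h1
  induction h1 with
  | here => exact fun h2 => h2
  | there hget _ ih => exact fun h2 => .there hget (ih h2)

theorem replaceAt_comp {t : Term F} {p : List Nat} {u : Term F} {q : List Nat} {v w : Term F} :
    SubtermAt t p u → ReplaceAt u q v w → ∃ t', ReplaceAt t (p ++ q) v t' := by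
  intro h1
  induction h1 with
  | here => exact fun h2 => ⟨w, h2⟩
  | there hget _ ih =>
    intro h2
    obtain ⟨t', ht'⟩ := ih h2
    exact ⟨_, .there hget ht'⟩

theorem subtermAt_nil {t u : Term F} (h : SubtermAt t [] u) : t = u := by
  cases h; rfl

theorem oneStep_mono {R S : TRS F} (h : R ⊆ S) {a b : Term F} :
    OneStep R a b → OneStep S a b :=
  fun ⟨ρ, hρ, hs⟩ => ⟨ρ, h hρ, hs⟩

theorem star_mono {R S : TRS F} (h : R ⊆ S) {a b : Term F} :
    StarRW R a b → StarRW S a b :=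
  fun hab => by
    induction hab with
    | refl => exact .refl
    | tail _ hs ih => exact .tail ih (oneStep_mono h hs)

theorem nf_exists {R : TRS F} (hterm : Terminating R) (t : Term F) : ∃ u, NFof R t u := by
  refine hterm.induction (C := fun t => ∃ u, NFof R t u) t ?_
  intro t ih
  by_cases h : NormalForm R t
  · exact ⟨t, .refl, h⟩
  · simp only [NormalForm, not_forall, not_not] at h
    obtain ⟨u, hu⟩ := h
    obtain ⟨v, hv, hnf⟩ := ih u hu
    exact ⟨v, .head hu hv, hnf⟩

theorem nf_star_eq {R : TRS F} {t u : Term F} (hnf : NormalForm R t) (h : StarRW R t u) :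
    t = u := by
  rcases h.cases_head with rfl | ⟨c, hc, _⟩
  · rfl
  · exact absurd hc (hnf c)

theorem nf_unique {R : TRS F} (hc : Confluent R) {s t u : Term F}
    (h1 : NFof R s t) (h2 : NFof R s u) : t = u := by
  obtain ⟨v, hv1, hv2⟩ := hc s t u h1.1 h2.1
  rw [nf_star_eq h1.2 hv1, nf_star_eq h2.2 hv2]

theorem conv_of_star {R : TRS F} {a b : Term F} (h : StarRW R a b) : Conv R a b := by
  induction h with
  | refl => exact .refl a
  | tail _ hstep ih => exact .trans _ _ _ ih (.rel _ _ hstep)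

/-- deleting a rule whose lhs has a proper non-variable subterm that is an
instance of the lhs of another rule preserves convergence, forward-closure and the
congruence. -/
theorem delete_rule_preserves {F : Type} (R : TRS F)
    (hconv : Convergent R) (hfc : FCclosed R)
    (l1 r1 l2 r2 : Term F) (h1 : (l1, r1) ∈ R) (h2 : (l2, r2) ∈ R)
    (hne : (l1, r1) ≠ (l2, r2))
    (p : List Nat) (u : Term F) (s : Nat → Term F)
    (hp : p ≠ []) (hsub : SubtermAt l1 p u) (hnv : ¬ u.IsVar)
    (hinst : u = l2.subst s) :
    Convergent (R \ {(l1, r1)}) ∧ FCclosed (R \ {(l1, r1)}) ∧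
      (∀ a b, Conv (R \ {(l1, r1)}) a b ↔ Conv R a b) := by
  set R' : TRS F := R \ {(l1, r1)} with hR'
  have hsubset : R' ⊆ R := Set.diff_subset
  have h2' : (l2, r2) ∈ R' := ⟨h2, fun h => hne (Set.mem_singleton_iff.mp h).symm⟩
  have husub : ∀ σ : Nat → Term F, u.subst σ = l2.subst (fun n => (s n).subst σ) := by
    intro σ; rw [hinst, Term.subst_subst']
  -- any term containing an instance of l1 is R'-reducible
  have keyA : ∀ (t : Term F) (q : List Nat) (σ : Nat → Term F),
      SubtermAt t q (l1.subst σ) → ¬ NormalForm R' t := by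
    intro t q σ hq hnf
    have hsu : SubtermAt (l1.subst σ) p (u.subst σ) := subtermAt_subst hsub
    have h3 : SubtermAt t (q ++ p) (l2.subst (fun n => (s n).subst σ)) := by
      rw [← husub σ]; exact subtermAt_trans hq hsu
    obtain ⟨t', ht'⟩ :=
      replaceAt_comp h3 (ReplaceAt.here _ (r2.subst (fun n => (s n).subst σ)))
    rw [List.append_nil] at ht'
    exact hnf t' ⟨(l2, r2), h2', (fun n => (s n).subst σ), q ++ p, h3, ht'⟩
  -- R'-normal forms are R-normal forms
  have hNF : ∀ t, NormalForm R' t → NormalForm R t := by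
    intro t hnf w hw
    obtain ⟨ρ, hρ, hstep⟩ := hw
    by_cases hρ1 : ρ = (l1, r1)
    · subst hρ1
      obtain ⟨σ, q, hs, _⟩ := hstep
      exact keyA t q σ hs hnf
    · exact hnf w ⟨ρ, ⟨hρ, hρ1⟩, hstep⟩
  have hterm' : Terminating R' := Subrelation.wf (fun h => oneStep_mono hsubset h) hconv.2
  have hnfR : ∀ a w, NFof R' a w → NFof R a w :=
    fun a w h => ⟨star_mono hsubset h.1, hNF w h.2⟩
  have hconf' : Confluent R' := by
    intro a b c hab hac
    obtain ⟨b', hb'⟩ := nf_exists hterm' b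
    obtain ⟨c', hc'⟩ := nf_exists hterm' c
    have h1 : NFof R a b' :=
      ⟨(star_mono hsubset hab).trans (hnfR b b' hb').1, (hnfR b b' hb').2⟩
    have h2 : NFof R a c' :=
      ⟨(star_mono hsubset hac).trans (hnfR c c' hc').1, (hnfR c c' hc').2⟩
    have heq : b' = c' := nf_unique hconv.1 h1 h2
    exact ⟨b', hb'.1, heq ▸ hc'.1⟩
  have hconvstep : ∀ a b, OneStep R a b → Conv R' a b := by
    intro a b hab
    obtain ⟨na, hna⟩ := nf_exists hterm' a
    obtain ⟨nb, hnb⟩ := nf_exists hterm' b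
    have h1 : NFof R a na := hnfR a na hna
    have h2 : NFof R a nb :=
      ⟨Relation.ReflTransGen.head hab (hnfR b nb hnb).1, (hnfR b nb hnb).2⟩
    have heq : na = nb := nf_unique hconv.1 h1 h2
    exact .trans _ _ _ (conv_of_star hna.1)
      (heq ▸ Relation.EqvGen.symm _ _ (conv_of_star hnb.1))
  have hfc' : FCclosed R' := by
    rintro t ⟨heps, hnred⟩ w ⟨hstar, hnfw⟩
    have hnredR : ¬ NormalForm R t := fun h => hnred (fun v hv => h v (oneStep_mono hsubset hv))
    have hepsR : EpsIrreducible R t := fun q v hv hq => hNF v (heps q v hv hq)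
    have hstep : OneStep R t w :=
      hfc t ⟨hepsR, hnredR⟩ w ⟨star_mono hsubset hstar, hNF w hnfw⟩
    obtain ⟨ρ, hρ, σ, q, hs, hr⟩ := hstep
    by_cases hρ1 : ρ = (l1, r1)
    · exfalso
      subst hρ1
      rcases q with _ | ⟨i, q⟩
      · -- root step with l1 → r1 : the subterm at p is an R'-redex
        have ht : t = l1.subst σ := subtermAt_nil hs
        have hsu : SubtermAt t p (u.subst σ) := by
          rw [ht]; exact subtermAt_subst hsub
        have hnfu : NormalForm R' (u.subst σ) := heps p (u.subst σ) hsu hp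
        refine hnfu (r2.subst (fun n => (s n).subst σ))
          ⟨(l2, r2), h2', (fun n => (s n).subst σ), [], ?_, .here _ _⟩
        rw [husub σ]
        exact .here _
      · -- step below the root : l1.subst σ is a proper subterm of t, hence R'-normal
        have hnfl : NormalForm R' (l1.subst σ) := heps _ _ hs (by simp)
        exact keyA (l1.subst σ) [] σ (.here _) hnfl
    · exact ⟨ρ, ⟨hρ, hρ1⟩, σ, q, hs, hr⟩
  refine ⟨⟨hconf', hterm'⟩, hfc', fun a b => ⟨fun h => ?_, fun h => ?_⟩⟩
  · induction h with
    | rel x y hxy => exact .rel _ _ (oneStep_mono hsubset hxy)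
    | refl x => exact .refl x
    | symm x y _ ih => exact .symm _ _ ih
    | trans x y z _ _ ih1 ih2 => exact .trans _ _ _ ih1 ih2
  · induction h with
    | rel x y hxy => exact hconvstep x y hxy
    | refl x => exact .refl x
    | symm x y _ ih => exact .symm _ _ ih
    | trans x y z _ _ ih1 ih2 => exact .trans _ _ _ ih1 ih2
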